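/- A symmetric K-user system (M × N, d)^K with d ≤ min(M, N) is proper if and only if M + N − (K + 1)·d ≥ 0, i.e. if and only if M + N ≥ (K + 1)·d. -/

import Mathlib

/-- The set of variables of a `K`-user MIMO interference alignment system:
transmit-beamformer coordinates `(j, n, i)` with `n : Fin (d j)`, `i : Fin (M j - d j)`,
together with receive-filter coordinates `(k, m, i)` with `m : Fin (d k)`,
`i : Fin (N k - d k)`. -/
abbrev IAVar (K : ℕ) (M N d : Fin K → ℕ) : Type :=
  (Σ j : Fin K, Fin (d j) × Fin (M j - d j)) ⊕ (Σ k : Fin K, Fin (d k) × Fin (N k - d k))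

/-- The set of interference alignment equations `(k, j, m, n)` with `k ≠ j`,
`m : Fin (d k)`, `n : Fin (d j)`. -/
abbrev IAEqs (K : ℕ) (d : Fin K → ℕ) : Type :=
  {p : Σ k : Fin K, Σ j : Fin K, Fin (d k) × Fin (d j) // p.1 ≠ p.2.1}

/-- The set of variables involved in the equation `(k, j, m, n)`:
all transmit variables `inl (j, n, i)` and all receive variables `inr (k, m, i)`. -/
def iaVar {K : ℕ} (M N d : Fin K → ℕ) (e : IAEqs K d) : Finset (IAVar K M N d) :=
  (Finset.univ.image fun i : Fin (M e.1.2.1 - d e.1.2.1) =>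
      Sum.inl ⟨e.1.2.1, (e.1.2.2.2, i)⟩)
  ∪ (Finset.univ.image fun i : Fin (N e.1.1 - d e.1.1) =>
      Sum.inr ⟨e.1.1, (e.1.2.2.1, i)⟩)

/-- A system is proper if every subset of equations involves at least as many
variables as equations. -/
def IsProper (K : ℕ) (M N d : Fin K → ℕ) : Prop :=
  ∀ S : Finset (IAEqs K d), S.card ≤ (S.biUnion (iaVar M N d)).card

/-- **Theorem 2 of the paper.** A symmetric system `(M × N, d)^K` with `d ≤ min M N`
is proper if and only if `M + N - (K + 1) * d ≥ 0`, i.e. `M + N ≥ (K + 1) * d`. -/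
theorem symmetric_proper_iff (K M N d : ℕ) (hd : d ≤ min M N) :
    IsProper K (fun _ => M) (fun _ => N) (fun _ => d) ↔ (K + 1) * d ≤ M + N := by
  have hdM : d ≤ M := le_trans hd (min_le_left _ _)
  have hdN : d ≤ N := le_trans hd (min_le_right _ _)
  constructor
  · intro hp
    rcases Nat.eq_zero_or_pos d with rfl | hd0
    · simp
    rcases Nat.lt_or_ge K 2 with hK | hK
    · interval_cases K <;> omega
    obtain ⟨k, rfl⟩ : ∃ k, K = k + 2 := ⟨K - 2, by omega⟩
    have h := hp Finset.univ
    have hcardE : (Finset.univ : Finset (IAEqs (k + 2) (fun _ => d))).card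
        = ((k + 2) * (k + 2) - (k + 2)) * (d * d) := by
      rw [Finset.card_univ]
      have e : IAEqs (k + 2) (fun _ => d) ≃
          {kj : Fin (k + 2) × Fin (k + 2) // kj.1 ≠ kj.2} × (Fin d × Fin d) :=
        { toFun := fun p => (⟨(p.1.1, p.1.2.1), p.2⟩, p.1.2.2)
          invFun := fun q => ⟨⟨q.1.1.1, q.1.1.2, q.2⟩, q.1.2⟩
          left_inv := fun p => rfl
          right_inv := fun q => rfl }
      rw [Fintype.card_congr e, Fintype.card_prod, Fintype.card_prod, Fintype.card_fin]
      congr 1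
      rw [Fintype.card_subtype]
      have he : (Finset.univ.filter fun kj : Fin (k + 2) × Fin (k + 2) => kj.1 ≠ kj.2)
          = (Finset.univ : Finset (Fin (k + 2))).offDiag := by
        ext kj
        simp [Finset.mem_offDiag]
      rw [he, Finset.offDiag_card]
      simp
    have hcardV : Fintype.card (IAVar (k + 2) (fun _ => M) (fun _ => N) (fun _ => d))
        = (k + 2) * (d * (M - d)) + (k + 2) * (d * (N - d)) := by
      simp [Fintype.card_sigma, mul_comm]
    have h2 : ((k + 2) * (k + 2) - (k + 2)) * (d * d)
        ≤ (k + 2) * (d * (M - d)) + (k + 2) * (d * (N - d)) := by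
      calc ((k + 2) * (k + 2) - (k + 2)) * (d * d)
          = (Finset.univ : Finset (IAEqs (k + 2) (fun _ => d))).card := hcardE.symm
        _ ≤ _ := h
        _ ≤ Fintype.card (IAVar (k + 2) (fun _ => M) (fun _ => N) (fun _ => d)) :=
            Finset.card_le_univ _
        _ = _ := hcardV
    have e1 : ((k + 2) * (k + 2) - (k + 2)) * (d * d) = ((k + 2) * d) * ((k + 1) * d) := by
      have : (k + 2) * (k + 2) - (k + 2) = (k + 2) * (k + 1) := by
        have : (k + 2) * (k + 2) = (k + 2) * (k + 1) + (k + 2) := by ring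
        omega
      rw [this]; ring
    have e2 : (k + 2) * (d * (M - d)) + (k + 2) * (d * (N - d))
        = ((k + 2) * d) * ((M - d) + (N - d)) := by ring
    rw [e1, e2] at h2
    have h3 : (k + 1) * d ≤ (M - d) + (N - d) :=
      Nat.le_of_mul_le_mul_left h2 (by positivity)
    have e3 : (k + 2 + 1) * d = (k + 1) * d + 2 * d := by ring
    omega
  · intro h
    classical
    intro S
    set a := M - d with ha
    set b := N - d with hb
    set L := (K - 1) * d with hL
    -- projections
    set T : Finset (Fin K × Fin d) :=
      S.image (fun e => (e.1.2.1, e.1.2.2.2)) with hT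
    set R : Finset (Fin K × Fin d) :=
      S.image (fun e => (e.1.1, e.1.2.2.1)) with hR
    set X := ((R ×ˢ T).filter fun pq => pq.1.1 ≠ pq.2.1).card with hX
    -- Step B : S.card ≤ X
    have hB : S.card ≤ X := by
      apply Finset.card_le_card_of_injOn
        (fun e => ((e.1.1, e.1.2.2.1), (e.1.2.1, e.1.2.2.2)))
      · intro e he
        simp only [Finset.mem_filter, Finset.mem_product]
        exact Finset.mem_filter.mpr ⟨Finset.mem_product.mpr ⟨Finset.mem_image_of_mem _ he, Finset.mem_image_of_mem _ he⟩, e.2⟩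
      · rintro ⟨⟨k1, j1, m1, n1⟩, h1⟩ _ ⟨⟨k2, j2, m2, n2⟩, h2⟩ _ heq
        simp only [Prod.mk.injEq] at heq
        obtain ⟨⟨rfl, rfl⟩, rfl, rfl⟩ := heq
        rfl
    -- per-element bound
    have hfilT : ∀ p : Fin K × Fin d,
        ((T.filter fun q => ¬ p.1 = q.1)).card ≤ min T.card L := by
      intro p
      refine le_min (Finset.card_le_card (Finset.filter_subset _ _)) ?_
      have hsub : (T.filter fun q => ¬ p.1 = q.1) ⊆
          (Finset.univ.erase p.1) ×ˢ (Finset.univ : Finset (Fin d)) := by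
        intro q hq
        simp only [Finset.mem_filter] at hq
        simp [Finset.mem_erase, Ne, eq_comm]
        exact hq.2
      calc ((T.filter fun q => ¬ p.1 = q.1)).card
          ≤ _ := Finset.card_le_card hsub
        _ = (K - 1) * d := by
            simp [Finset.card_erase_of_mem]
    have hfilR : ∀ p : Fin K × Fin d,
        ((R.filter fun q => ¬ q.1 = p.1)).card ≤ min R.card L := by
      intro p
      refine le_min (Finset.card_le_card (Finset.filter_subset _ _)) ?_
      have hsub : (R.filter fun q => ¬ q.1 = p.1) ⊆
          (Finset.univ.erase p.1) ×ˢ (Finset.univ : Finset (Fin d)) := by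
        intro q hq
        simp only [Finset.mem_filter] at hq
        simp [Finset.mem_erase, Ne]
        exact hq.2
      calc ((R.filter fun q => ¬ q.1 = p.1)).card
          ≤ _ := Finset.card_le_card hsub
        _ = (K - 1) * d := by
            simp [Finset.card_erase_of_mem]
    -- Step C1 : X ≤ R.card * min T.card L
    have hC1 : X ≤ R.card * min T.card L := by
      rw [hX, Finset.product_eq_biUnion, Finset.filter_biUnion]
      calc _ ≤ ∑ p ∈ R, ((T.image fun q => (p, q)).filter
              fun pq => ¬ pq.1.1 = pq.2.1).card := Finset.card_biUnion_le
        _ ≤ ∑ p ∈ R, min T.card L := by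
            refine Finset.sum_le_sum fun p _ => ?_
            rw [Finset.filter_image]
            exact le_trans (Finset.card_image_le) (hfilT p)
        _ = R.card * min T.card L := by
            rw [Finset.sum_const, smul_eq_mul]
    -- Step C2 : X ≤ T.card * min R.card L
    have hC2 : X ≤ T.card * min R.card L := by
      rw [hX, Finset.product_eq_biUnion_right, Finset.filter_biUnion]
      calc _ ≤ ∑ p ∈ T, ((R.image fun q => (q, p)).filter
              fun pq => ¬ pq.1.1 = pq.2.1).card := Finset.card_biUnion_le
        _ ≤ ∑ p ∈ T, min R.card L := by
            refine Finset.sum_le_sum fun p _ => ?_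
            rw [Finset.filter_image]
            exact le_trans (Finset.card_image_le) (hfilR p)
        _ = T.card * min R.card L := by
            rw [Finset.sum_const, smul_eq_mul]
    -- arithmetic
    have hLab : L ≤ a + b := by
      rcases K with _ | k
      · simp [hL]
      · have e1 : (k + 1 + 1) * d = k * d + (d + d) := by ring
        have e2 : (k + 1 - 1) * d = k * d := by simp
        rw [e1] at h
        rw [hL, e2, ha, hb]
        omega
    have hcore : X ≤ T.card * a + R.card * b := by
      have h1 : X ≤ R.card * min T.card L := hC1
      have h2 : X ≤ T.card * min R.card L := hC2
      rcases le_total T.card R.card with hh | hh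
      · calc X ≤ T.card * min R.card L := h2
          _ ≤ T.card * (a + b) := Nat.mul_le_mul_left _ (le_trans (min_le_right _ _) hLab)
          _ = T.card * a + T.card * b := by ring
          _ ≤ T.card * a + R.card * b := by
              have := Nat.mul_le_mul_right b hh; omega
      · calc X ≤ R.card * min T.card L := h1
          _ ≤ R.card * (a + b) := Nat.mul_le_mul_left _ (le_trans (min_le_right _ _) hLab)
          _ = R.card * b + R.card * a := by ring
          _ ≤ T.card * a + R.card * b := by
              have := Nat.mul_le_mul_right a hh; omega
    -- Step A : lower bound on variables
    set FA : (Fin K × Fin d) × Fin (M - d) → IAVar K (fun _ => M) (fun _ => N) (fun _ => d) :=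
      fun q => Sum.inl ⟨q.1.1, (q.1.2, q.2)⟩ with hFA
    set FB : (Fin K × Fin d) × Fin (N - d) → IAVar K (fun _ => M) (fun _ => N) (fun _ => d) :=
      fun q => Sum.inr ⟨q.1.1, (q.1.2, q.2)⟩ with hFB
    have hFAinj : Function.Injective FA := by
      rintro ⟨⟨j1, n1⟩, i1⟩ ⟨⟨j2, n2⟩, i2⟩ hq
      simp only [hFA, Sum.inl.injEq, Sigma.mk.inj_iff, heq_eq_eq, Prod.mk.injEq] at hq
      obtain ⟨rfl, rfl, rfl⟩ := hq
      rfl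
    have hFBinj : Function.Injective FB := by
      rintro ⟨⟨j1, n1⟩, i1⟩ ⟨⟨j2, n2⟩, i2⟩ hq
      simp only [hFB, Sum.inr.injEq, Sigma.mk.inj_iff, heq_eq_eq, Prod.mk.injEq] at hq
      obtain ⟨rfl, rfl, rfl⟩ := hq
      rfl
    set A := (T ×ˢ (Finset.univ : Finset (Fin (M - d)))).image FA with hA'
    set B := (R ×ˢ (Finset.univ : Finset (Fin (N - d)))).image FB with hB'
    have hdisj : Disjoint A B := by
      rw [Finset.disjoint_left]
      rintro x hx hx'
      simp only [hA', hB', Finset.mem_image, hFA, hFB] at hx hx'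
      obtain ⟨q1, _, rfl⟩ := hx
      obtain ⟨q2, _, hq2⟩ := hx'
      cases hq2
    have hsub : A ∪ B ⊆ S.biUnion (iaVar (fun _ => M) (fun _ => N) (fun _ => d)) := by
      intro x hx
      rw [Finset.mem_union] at hx
      rw [Finset.mem_biUnion]
      rcases hx with hx | hx
      · simp only [hA', Finset.mem_image, Finset.mem_product] at hx
        obtain ⟨⟨p, i⟩, ⟨hpT, -⟩, rfl⟩ := hx
        simp only [hT, Finset.mem_image] at hpT
        obtain ⟨e, heS, hpe⟩ := hpT
        refine ⟨e, heS, ?_⟩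
        rw [iaVar, Finset.mem_union]
        left
        rw [Finset.mem_image]
        refine ⟨i, Finset.mem_univ _, ?_⟩
        obtain ⟨j, n⟩ := p
        obtain ⟨h1, h2⟩ := Prod.mk_inj.mp hpe
        subst h1; subst h2
        rfl
      · simp only [hB', Finset.mem_image, Finset.mem_product] at hx
        obtain ⟨⟨p, i⟩, ⟨hpR, -⟩, rfl⟩ := hx
        simp only [hR, Finset.mem_image] at hpR
        obtain ⟨e, heS, hpe⟩ := hpR
        refine ⟨e, heS, ?_⟩
        rw [iaVar, Finset.mem_union]
        right
        rw [Finset.mem_image]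
        refine ⟨i, Finset.mem_univ _, ?_⟩
        obtain ⟨j, n⟩ := p
        obtain ⟨h1, h2⟩ := Prod.mk_inj.mp hpe
        subst h1; subst h2
        rfl
    have hcardA : A.card = T.card * a := by
      rw [hA', Finset.card_image_of_injective _ hFAinj, Finset.card_product]
      simp [ha]
    have hcardB : B.card = R.card * b := by
      rw [hB', Finset.card_image_of_injective _ hFBinj, Finset.card_product]
      simp [hb]
    have hAB : T.card * a + R.card * b ≤
        (S.biUnion (iaVar (fun _ => M) (fun _ => N) (fun _ => d))).card := by
      calc T.card * a + R.card * b = (A ∪ B).card := by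
            rw [Finset.card_union_of_disjoint hdisj, hcardA, hcardB]
        _ ≤ _ := Finset.card_le_card hsub
    omega
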